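/- Let L = Σ_{i=0}^n a_i(z) φ_p^i be a Mahler operator over the Hahn series field H with all slopes nonnegative (S(L) ⊂ ℝ_{≥0}) and a_0 = 1, and let c ∈ ℂ^×. Then the Newton polygon of the operator L·(φ_p − c) equals ([1, p] × [val_z(a_0), ∞)) ∪ ψ(N(L)), where ψ(x, y) = (px, y); consequently the set of slopes of L·(φ_p − c) is p^{−1}·S(L) ∪ {0}. -/

import Mathlib

/-- The Newton polygon of a Mahler operator `L = Σ_{i=0}^n a_i(z) φ_p^i`: the convex hull
in `ℝ²` of `{(p^i, j) : 0 ≤ i ≤ n, a_i ≠ 0, j ≥ val_z(a_i)}`. -/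
noncomputable def mahlerNewtonPolygon (p n : ℕ) (a : ℕ → HahnSeries ℚ ℂ) : Set (ℝ × ℝ) :=
  convexHull ℝ
    {q : ℝ × ℝ | ∃ i ≤ n, a i ≠ 0 ∧ q.1 = (p : ℝ) ^ i ∧ ((a i).order : ℝ) ≤ q.2}

/-- The multiplicity of `s ∈ ℚ` as a slope of `L = Σ_{i=0}^n a_i(z) φ_p^i`: among the
indices `i` (with `a_i ≠ 0`) minimizing `val_z(a_i) − s·p^i`, the difference between the
largest and the smallest; `s` is a slope of `L` precisely when this is nonzero. -/
noncomputable def mahlerSlopeMult (p n : ℕ) (a : ℕ → HahnSeries ℚ ℂ) (s : ℚ) : ℕ :=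
  sSup {i : ℕ | i ≤ n ∧ a i ≠ 0 ∧ ∀ j ≤ n, a j ≠ 0 →
      (a i).order - s * (p : ℚ) ^ i ≤ (a j).order - s * (p : ℚ) ^ j} -
    sInf {i : ℕ | i ≤ n ∧ a i ≠ 0 ∧ ∀ j ≤ n, a j ≠ 0 →
      (a i).order - s * (p : ℚ) ^ i ≤ (a j).order - s * (p : ℚ) ^ j}

namespace MahlerAux
open HahnSeries

abbrev H := HahnSeries ℚ ℂ

lemma le_order_of (x : H) (hx : x ≠ 0) (m : ℚ) (h : ∀ g < m, x.coeff g = 0) :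
    m ≤ x.order := by
  by_contra hlt
  push_neg at hlt
  exact (mt HahnSeries.coeff_order_eq_zero.mp hx) (h _ hlt)

lemma smul_facts {c : ℂ} (hc : c ≠ 0) {x : H} (hx : x ≠ 0) :
    c • x ≠ 0 ∧ (c • x).order = x.order := by
  have h1 : (c • x).coeff x.order ≠ 0 := by
    rw [HahnSeries.coeff_smul, smul_eq_mul]
    exact mul_ne_zero hc (mt HahnSeries.coeff_order_eq_zero.mp hx)
  have hcx : c • x ≠ 0 := by
    intro h; rw [h] at h1; simp at h1
  refine ⟨hcx, le_antisymm (HahnSeries.order_le_of_coeff_ne_zero h1)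
    (HahnSeries.order_le_of_coeff_ne_zero ?_)⟩
  intro h0
  apply (mt HahnSeries.coeff_order_eq_zero.mp hcx)
  rw [HahnSeries.coeff_smul, h0, smul_zero]

lemma order_sub_of_lt {x y : H} (hx : x ≠ 0) (hy : y ≠ 0) (hxy : x.order < y.order) :
    x - y ≠ 0 ∧ (x - y).order = x.order := by
  have hco : (x - y).coeff x.order ≠ 0 := by
    rw [HahnSeries.coeff_sub, HahnSeries.coeff_eq_zero_of_lt_order hxy, sub_zero]
    exact (mt HahnSeries.coeff_order_eq_zero.mp hx)
  have hne : x - y ≠ 0 := by intro h; rw [h] at hco; simp at hco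
  refine ⟨hne, le_antisymm (HahnSeries.order_le_of_coeff_ne_zero hco)
    (le_order_of _ hne x.order ?_)⟩
  intro g hg
  rw [HahnSeries.coeff_sub, HahnSeries.coeff_eq_zero_of_lt_order hg,
    HahnSeries.coeff_eq_zero_of_lt_order (hg.trans hxy), sub_zero]

lemma min_le_order_sub {x y : H} (h : x - y ≠ 0) (hx : x ≠ 0) (hy : y ≠ 0) :
    min x.order y.order ≤ (x - y).order := by
  apply le_order_of _ h
  intro g hg
  rw [HahnSeries.coeff_sub,
    HahnSeries.coeff_eq_zero_of_lt_order (lt_of_lt_of_le hg (min_le_left _ _)),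
    HahnSeries.coeff_eq_zero_of_lt_order (lt_of_lt_of_le hg (min_le_right _ _)), sub_zero]

lemma mem_hull_horizontal {S : Set (ℝ × ℝ)} {x1 x2 x y : ℝ}
    (h1 : ((x1, y) : ℝ × ℝ) ∈ convexHull ℝ S) (h2 : ((x2, y) : ℝ × ℝ) ∈ convexHull ℝ S)
    (hx1 : x1 ≤ x) (hx2 : x ≤ x2) : ((x, y) : ℝ × ℝ) ∈ convexHull ℝ S := by
  rcases eq_or_lt_of_le (hx1.trans hx2) with h | h
  · have hx : x = x1 := le_antisymm (h ▸ hx2) hx1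
    rwa [hx]
  · set t : ℝ := (x - x1) / (x2 - x1) with ht
    have hd : 0 < x2 - x1 := by linarith
    have ht0 : 0 ≤ t := div_nonneg (by linarith) hd.le
    have ht1 : t ≤ 1 := by rw [div_le_one hd]; linarith
    have := (convex_convexHull ℝ S) h1 h2 (by linarith : (0:ℝ) ≤ 1 - t) ht0 (by ring)
    convert this using 1
    have hxx : (1 - t) * x1 + t * x2 = x := by
      field_simp [ht]
      rw [ht]; field_simp; ring
    ext <;> simp [Prod.smul_mk] <;> nlinarith [hxx]

lemma convex_union_strip {P : ℝ} (hP : 1 ≤ P) {D : Set (ℝ × ℝ)} (hD : Convex ℝ D)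
    (hsub : ∀ q ∈ D, P ≤ q.1 ∧ 0 ≤ q.2)
    (hray : ∀ y : ℝ, 0 ≤ y → ((P, y) : ℝ × ℝ) ∈ D) :
    Convex ℝ (Set.Icc (1 : ℝ) P ×ˢ Set.Ici (0 : ℝ) ∪ D) := by
  set C : Set (ℝ × ℝ) := Set.Icc (1 : ℝ) P ×ˢ Set.Ici (0 : ℝ) with hC
  have hCmem : ∀ q : ℝ × ℝ, q ∈ C ↔ (1 ≤ q.1 ∧ q.1 ≤ P) ∧ 0 ≤ q.2 := by
    intro q; simp [hC, Set.mem_prod]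
  have key : ∀ q1 ∈ C, ∀ q2 ∈ D, ∀ α β : ℝ, 0 ≤ α → 0 ≤ β → α + β = 1 →
      α • q1 + β • q2 ∈ C ∪ D := by
    rintro ⟨x1, y1⟩ h1 ⟨x2, y2⟩ h2 α β hα hβ hs
    rw [hCmem] at h1
    obtain ⟨⟨hx11, hx1P⟩, hy1⟩ := h1
    obtain ⟨hx2P, hy2⟩ := hsub _ h2
    simp only [Prod.smul_mk, Prod.mk_add_mk, smul_eq_mul]
    set x : ℝ := α * x1 + β * x2 with hx
    set y : ℝ := α * y1 + β * y2 with hy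
    have hy0 : 0 ≤ y := by positivity
    have hx1 : 1 ≤ x := by nlinarith
    rcases le_or_gt x P with hxP | hxP
    · left; rw [hCmem]; exact ⟨⟨hx1, hxP⟩, hy0⟩
    · right
      have hx2gt : P < x2 := by nlinarith
      set δ : ℝ := (x - P) / (x2 - P) with hδ
      have hden : 0 < x2 - P := by linarith
      have hδ0 : 0 < δ := div_pos (by linarith) hden
      have hδβ : δ ≤ β := by
        rw [div_le_iff₀ hden]
        nlinarith
      have hβ1 : β ≤ 1 := by linarith
      have hδ1 : δ ≤ 1 := hδβ.trans hβ1
      set γ : ℝ := 1 - δ with hγ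
      have hγ0 : 0 ≤ γ := by linarith
      rcases eq_or_lt_of_le hγ0 with hγe | hγpos
      · have hδe : δ = 1 := by rw [hγ] at hγe; linarith
        have hβe : β = 1 := le_antisymm hβ1 (hδe ▸ hδβ)
        have hαe : α = 0 := by linarith
        have : x = x2 ∧ y = y2 := by constructor <;> simp [hx, hy, hαe, hβe]
        rw [this.1, this.2]; exact h2
      · set t : ℝ := (y - δ * y2) / γ with htdef
        have hnum : 0 ≤ y - δ * y2 := by nlinarith
        have ht0 : 0 ≤ t := div_nonneg hnum hγpos.le
        have he : ((P, t) : ℝ × ℝ) ∈ D := hray t ht0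
        have := hD he h2 hγpos.le hδ0.le (by rw [hγ]; ring)
        convert this using 2
        · simp only [Prod.smul_mk, Prod.mk_add_mk, smul_eq_mul]
          have : δ * (x2 - P) = x - P := by rw [hδ]; field_simp
          nlinarith [this]
        · simp only [Prod.smul_mk, Prod.mk_add_mk, smul_eq_mul]
          rw [htdef]
          field_simp
          ring
  intro q1 h1 q2 h2 α β hα hβ hs
  rcases h1 with h1 | h1 <;> rcases h2 with h2 | h2
  · left
    exact ((convex_Icc _ _).prod (convex_Ici _)) h1 h2 hα hβ hs
  · exact key q1 h1 q2 h2 α β hα hβ hs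
  · rw [add_comm]
    exact key q2 h2 q1 h1 β α hβ hα (by linarith)
  · right; exact hD h1 h2 hα hβ hs


lemma nat_sub_zero_of_subset_singleton {S : Set ℕ} (h : S ⊆ {0}) : sSup S - sInf S = 0 := by
  rcases Set.subset_singleton_iff_eq.mp h with h | h <;> simp [h]

end MahlerAux


open MahlerAux in
/-- Let `L = Σ_{i=0}^n a_i(z) φ_p^i` have all slopes nonnegative and `a_0 = 1`, and let
`c ∈ ℂ^×`. Then the Newton polygon of `L·(φ_p − c) = Σ_{i=0}^{n+1} b_i φ_p^i` (with
`b_0 = −c·a_0`, `b_i = a_{i−1} − c·a_i`, `b_{n+1} = a_n`) equals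
`([1,p] × [val_z(a_0), ∞)) ∪ ψ(N(L))` where `ψ(x,y) = (px, y)`; consequently the slopes
of `L·(φ_p − c)` are exactly `p^{−1}·S(L) ∪ {0}`. -/
theorem newtonPolygon_mul_phi_sub_c (p n : ℕ) (hp : 2 ≤ p) (a : ℕ → HahnSeries ℚ ℂ)
    (h0 : a 0 = 1) (hn : a n ≠ 0) (htail : ∀ i, n < i → a i = 0)
    (hslopes : ∀ s : ℚ, s < 0 → mahlerSlopeMult p n a s = 0)
    (c : ℂ) (hc : c ≠ 0) :
    let b : ℕ → HahnSeries ℚ ℂ := fun i => (if i = 0 then 0 else a (i - 1)) - c • a i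
    mahlerNewtonPolygon p (n + 1) b =
        (Set.Icc (1 : ℝ) (p : ℝ) ×ˢ Set.Ici (((a 0).order : ℝ))) ∪
          ((fun q : ℝ × ℝ => ((p : ℝ) * q.1, q.2)) '' mahlerNewtonPolygon p n a) ∧
      ∀ s : ℚ, mahlerSlopeMult p (n + 1) b s ≠ 0 ↔
        s = 0 ∨ mahlerSlopeMult p n a ((p : ℚ) * s) ≠ 0 := by
  classical
  intro b
  have hbdef : ∀ i, b i = (if i = 0 then 0 else a (i - 1)) - c • a i := fun i => rfl
  have ha0 : a 0 ≠ 0 := by rw [h0]; exact one_ne_zero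
  have hv0 : (a 0).order = 0 := by rw [h0]; exact HahnSeries.order_one
  have hpQ : (1 : ℚ) < (p : ℚ) := by exact_mod_cast (by omega : 1 < p)
  have hbs : ∀ i, 1 ≤ i → b i = a (i - 1) - c • a i := by
    intro i hi
    rw [hbdef i]
    have hine : i ≠ 0 := by omega
    simp [hine]
  have hbn1 : b (n + 1) = a n := by
    rw [hbs (n + 1) (by omega)]
    simp [htail (n + 1) (by omega)]
  have hN : ∀ k ≤ n, a k ≠ 0 → 0 ≤ (a k).order := by
      have ha0 : a 0 ≠ 0 := by rw [h0]; exact one_ne_zero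
      have hv0 : (a 0).order = 0 := by rw [h0]; exact HahnSeries.order_one
      have hpQ : (1 : ℚ) < (p : ℚ) := by exact_mod_cast (by omega : 1 < p)
      have hpow : ∀ i : ℕ, 1 ≤ i → (0 : ℚ) < (p : ℚ) ^ i - 1 := by
        intro i hi
        have : (1 : ℚ) < (p : ℚ) ^ i := by
          calc (1:ℚ) < (p:ℚ) := hpQ
          _ = (p:ℚ)^1 := (pow_one _).symm
          _ ≤ (p:ℚ)^i := pow_le_pow_right₀ hpQ.le hi
        linarith
      by_contra hcon
      push_neg at hcon
      obtain ⟨k, hkn, hak, hvk⟩ := hcon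
      have hk0 : k ≠ 0 := by
        rintro rfl
        rw [hv0] at hvk
        exact lt_irrefl _ hvk
      set F : Finset ℕ := (Finset.Icc 1 n).filter (fun i => a i ≠ 0) with hF
      have hkF : k ∈ F := by
        simp only [hF, Finset.mem_filter, Finset.mem_Icc]
        exact ⟨⟨by omega, hkn⟩, hak⟩
      set r : ℕ → ℚ := fun i => (a i).order / ((p : ℚ) ^ i - 1) with hr
      obtain ⟨m, hmF, hm⟩ := F.exists_min_image r ⟨k, hkF⟩
      obtain ⟨⟨hm1, hmn⟩, ham⟩ : (1 ≤ m ∧ m ≤ n) ∧ a m ≠ 0 := by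
        simpa [hF, Finset.mem_filter, Finset.mem_Icc] using hmF
      set s : ℚ := r m with hs
      have hsneg : s < 0 := by
        have h1 : s ≤ r k := hm k hkF
        have h2 : r k < 0 := div_neg_of_neg_of_pos hvk (hpow k (by omega))
        linarith
      -- the value of s * (p^m - 1)
      have hsm : s * ((p : ℚ) ^ m - 1) = (a m).order := by
        rw [hs, hr]
        exact div_mul_cancel₀ _ (ne_of_gt (hpow m hm1))
      have hbound : ∀ j ≤ n, a j ≠ 0 → -s ≤ (a j).order - s * (p : ℚ) ^ j := by
        intro j hjn haj
        rcases Nat.eq_zero_or_pos j with rfl | hj1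
        · rw [hv0]; simp
        · have hjF : j ∈ F := by
            simp only [hF, Finset.mem_filter, Finset.mem_Icc]
            exact ⟨⟨hj1, hjn⟩, haj⟩
          have := hm j hjF
          have hpj := hpow j hj1
          have : s * ((p:ℚ)^j - 1) ≤ (a j).order := by
            calc s * ((p:ℚ)^j - 1) ≤ r j * ((p:ℚ)^j - 1) := by nlinarith
            _ = (a j).order := div_mul_cancel₀ _ (ne_of_gt hpj)
          linarith
      have h0mem : 0 ∈ {i : ℕ | i ≤ n ∧ a i ≠ 0 ∧ ∀ j ≤ n, a j ≠ 0 →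
          (a i).order - s * (p : ℚ) ^ i ≤ (a j).order - s * (p : ℚ) ^ j} := by
        refine ⟨Nat.zero_le n, ha0, fun j hj haj => ?_⟩
        rw [hv0]
        simpa using hbound j hj haj
      have hmmem : m ∈ {i : ℕ | i ≤ n ∧ a i ≠ 0 ∧ ∀ j ≤ n, a j ≠ 0 →
          (a i).order - s * (p : ℚ) ^ i ≤ (a j).order - s * (p : ℚ) ^ j} := by
        refine ⟨hmn, ham, fun j hj haj => ?_⟩
        have : (a m).order - s * (p:ℚ)^m = -s := by linarith [hsm]
        rw [this]
        exact hbound j hj haj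
      have hmult := hslopes s hsneg
      rw [mahlerSlopeMult] at hmult
      set S := {i : ℕ | i ≤ n ∧ a i ≠ 0 ∧ ∀ j ≤ n, a j ≠ 0 →
          (a i).order - s * (p : ℚ) ^ i ≤ (a j).order - s * (p : ℚ) ^ j} with hS
      have hinf : sInf S = 0 := Nat.sInf_eq_zero.mpr (Or.inl h0mem)
      have hsup : m ≤ sSup S := le_csSup ⟨n, fun x hx => hx.1⟩ hmmem
      omega
  -- no negative coefficients
  have hcsa : ∀ j : ℕ, ∀ g : ℚ, g < 0 → (a j).coeff g = 0 := by
    intro j g hg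
    rcases le_or_gt j n with hj | hj
    · by_cases haj : a j = 0
      · simp [haj]
      · exact HahnSeries.coeff_eq_zero_of_lt_order (lt_of_lt_of_le hg (hN j hj haj))
    · simp [htail j hj]
  have hcsb : ∀ i : ℕ, ∀ g : ℚ, g < 0 → (b i).coeff g = 0 := by
    intro i g hg
    rw [hbdef]
    simp only [HahnSeries.coeff_sub, HahnSeries.coeff_smul, hcsa _ _ hg, smul_zero, sub_zero]
    by_cases hi : i = 0 <;> simp [hi, hcsa _ _ hg]
  have hword : ∀ i, b i ≠ 0 → 0 ≤ (b i).order := by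
    intro i hbi
    by_contra hlt
    push_neg at hlt
    exact (mt HahnSeries.coeff_order_eq_zero.mp hbi) (hcsb i _ hlt)
  have hb0 : (b 0).coeff 0 = -c := by
    rw [hbdef]
    simp [HahnSeries.coeff_sub, HahnSeries.coeff_smul, h0, HahnSeries.coeff_one]
  have hb0ne : b 0 ≠ 0 := by
    intro h; rw [h] at hb0; simp at hb0; exact hc hb0
  have hw0 : (b 0).order = 0 := by
    refine le_antisymm (HahnSeries.order_le_of_coeff_ne_zero ?_) (hword 0 hb0ne)
    rw [hb0]; exact neg_ne_zero.mpr hc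
  -- existence of i₀ ≥ 1 with coeff 0 ≠ 0
  have histar : ∃ i, 1 ≤ i ∧ i ≤ n + 1 ∧ (b i).coeff 0 ≠ 0 := by
    by_contra h
    push_neg at h
    have key : ∀ i ≤ n, (a i).coeff 0 = (c⁻¹) ^ i := by
      intro i
      induction i with
      | zero => intro _; rw [h0]; simp [HahnSeries.coeff_one]
      | succ i ih =>
        intro hin
        have h1 := h (i + 1) (by omega) (by omega)
        rw [hbs (i + 1) (by omega)] at h1
        simp only [Nat.add_sub_cancel, HahnSeries.coeff_sub, HahnSeries.coeff_smul,
          smul_eq_mul] at h1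
        have h2 : (a i).coeff 0 = c * (a (i+1)).coeff 0 := by linear_combination h1
        rw [ih (by omega)] at h2
        rw [pow_succ']
        calc (a (i+1)).coeff 0 = c⁻¹ * (c * (a (i+1)).coeff 0) := by field_simp
        _ = c⁻¹ * c⁻¹ ^ i := by rw [← h2]
    have hlast := h (n + 1) (by omega) le_rfl
    rw [hbn1, key n le_rfl] at hlast
    exact pow_ne_zero n (inv_ne_zero hc) hlast
  obtain ⟨i₀, hi₀1, hi₀n, hbi₀⟩ := histar
  have hbi₀ne : b i₀ ≠ 0 := by
    intro h
    rw [h] at hbi₀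
    simp at hbi₀
  have hwi₀ : (b i₀).order = 0 :=
    le_antisymm (HahnSeries.order_le_of_coeff_ne_zero hbi₀) (hword i₀ hbi₀ne)
  have hword' : ∀ i, b i ≠ 0 → 0 ≤ (b i).order := hword
  refine ⟨?_, ?_⟩
  · unfold mahlerNewtonPolygon
    have ha0 : a 0 ≠ 0 := by rw [h0]; exact one_ne_zero
    have hv0 : (a 0).order = 0 := by rw [h0]; exact HahnSeries.order_one
    have hpR : (1 : ℝ) < (p : ℝ) := by exact_mod_cast (by omega : 1 < p)
    set Sa : Set (ℝ × ℝ) :=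
      {q : ℝ × ℝ | ∃ i ≤ n, a i ≠ 0 ∧ q.1 = (p : ℝ) ^ i ∧ ((a i).order : ℝ) ≤ q.2} with hSa
    set Sb : Set (ℝ × ℝ) :=
      {q : ℝ × ℝ | ∃ i ≤ n + 1, b i ≠ 0 ∧ q.1 = (p : ℝ) ^ i ∧ ((b i).order : ℝ) ≤ q.2} with hSb
    rw [hv0, Rat.cast_zero]
    set lψ : (ℝ × ℝ) →ₗ[ℝ] (ℝ × ℝ) :=
      LinearMap.prod ((p : ℝ) • LinearMap.fst ℝ ℝ ℝ) (LinearMap.snd ℝ ℝ ℝ) with hlψdef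
    have hlψ : (fun q : ℝ × ℝ => ((p : ℝ) * q.1, q.2)) = ⇑lψ := by
      funext q
      simp [hlψdef, LinearMap.prod_apply, smul_eq_mul]
    have hpow_ge1 : ∀ i : ℕ, (1 : ℝ) ≤ (p : ℝ) ^ i := fun i => one_le_pow₀ hpR.le
    have hpow_mono : ∀ i j : ℕ, i ≤ j → (p : ℝ) ^ i ≤ (p : ℝ) ^ j :=
      fun i j h => pow_le_pow_right₀ hpR.le h
    -- membership basic
    have hmemSb : ∀ i ≤ n + 1, b i ≠ 0 → ∀ y : ℝ, ((b i).order : ℝ) ≤ y →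
        (((p : ℝ) ^ i, y) : ℝ × ℝ) ∈ Sb := fun i hi hbi y hy => ⟨i, hi, hbi, rfl, hy⟩
    have hmemSa : ∀ i ≤ n, a i ≠ 0 → ∀ y : ℝ, ((a i).order : ℝ) ≤ y →
        (((p : ℝ) ^ i, y) : ℝ × ℝ) ∈ Sa := fun i hi hai y hy => ⟨i, hi, hai, rfl, hy⟩
    have h1Sb : ∀ y : ℝ, 0 ≤ y → ((1 : ℝ), y) ∈ Sb := by
      intro y hy
      have := hmemSb 0 (by omega) hb0ne y (by rw [hw0]; exact_mod_cast hy)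
      simpa using this
    have h1Sa : ∀ y : ℝ, 0 ≤ y → ((1 : ℝ), y) ∈ Sa := by
      intro y hy
      have := hmemSa 0 (by omega) ha0 y (by rw [hv0]; exact_mod_cast hy)
      simpa using this
    -- hull Sa is in the quadrant
    have hSaQuad : convexHull ℝ Sa ⊆ Set.Ici (1 : ℝ) ×ˢ Set.Ici (0 : ℝ) := by
      apply convexHull_min
      · rintro ⟨x, y⟩ ⟨i, hi, hai, hx, hy⟩
        simp only at hx hy
        have h1 : (1 : ℝ) ≤ x := hx ▸ hpow_ge1 i
        have h2 : (0 : ℝ) ≤ y := le_trans (by exact_mod_cast hN i hi hai) hy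
        exact ⟨h1, h2⟩
      · exact (convex_Ici _).prod (convex_Ici _)
    set D : Set (ℝ × ℝ) := (fun q : ℝ × ℝ => ((p : ℝ) * q.1, q.2)) '' convexHull ℝ Sa with hD
    have hDhull : D = convexHull ℝ ((fun q : ℝ × ℝ => ((p : ℝ) * q.1, q.2)) '' Sa) := by
      rw [hD, hlψ, lψ.image_convexHull]
    have hDconvex : Convex ℝ D := by
      rw [hD, hlψ]
      exact (convex_convexHull ℝ Sa).linear_image lψ
    have hDsub : ∀ q ∈ D, (p : ℝ) ≤ q.1 ∧ 0 ≤ q.2 := by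
      rintro q ⟨r, hr, rfl⟩
      obtain ⟨h1, h2⟩ := hSaQuad hr
      simp only [Set.mem_Ici] at h1 h2
      refine ⟨?_, h2⟩
      simp only
      nlinarith [hpR]
    have hray : ∀ y : ℝ, 0 ≤ y → (((p : ℝ), y) : ℝ × ℝ) ∈ D := by
      intro y hy
      refine ⟨(1, y), subset_convexHull ℝ Sa (h1Sa y hy), ?_⟩
      simp
    have hC : ∀ m : ℕ, ∀ i ≤ n, n ≤ i + m → a i ≠ 0 → ∀ y : ℝ, ((a i).order : ℝ) ≤ y →
        (((p : ℝ) ^ (i + 1), y) : ℝ × ℝ) ∈ convexHull ℝ Sb := by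
      intro m
      induction m with
      | zero =>
        intro i hin hd hai y hy
        have hieq : i = n := by omega
        subst hieq
        exact subset_convexHull ℝ Sb
          (hmemSb (i + 1) (by omega) (by rw [hbn1]; exact hai) y (by rw [hbn1]; exact hy))
      | succ m ih =>
        intro i hin hd hai y hy
        rcases eq_or_lt_of_le hin with hieq | hin'
        · subst hieq
          exact subset_convexHull ℝ Sb
            (hmemSb (i + 1) (by omega) (by rw [hbn1]; exact hai) y (by rw [hbn1]; exact hy))
        · by_cases ha1 : a (i + 1) = 0
          · have hb : b (i + 1) = a i := by
              rw [hbs (i + 1) (by omega)]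
              simp [ha1]
            exact subset_convexHull ℝ Sb
              (hmemSb (i + 1) (by omega) (by rw [hb]; exact hai) y (by rw [hb]; exact hy))
          · rcases lt_or_ge ((a i).order) ((a (i + 1)).order) with hlt | hle
            · obtain ⟨hcne, hco⟩ := smul_facts hc ha1
              obtain ⟨hbne, hbo⟩ := order_sub_of_lt hai hcne (by rw [hco]; exact hlt)
              have hb : b (i + 1) = a i - c • a (i + 1) := by
                rw [hbs (i + 1) (by omega)]
                simp
              refine subset_convexHull ℝ Sb
                (hmemSb (i + 1) (by omega) (by rw [hb]; exact hbne) y ?_)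
              rw [hb, hbo]
              exact hy
            · have hy' : ((a (i + 1)).order : ℝ) ≤ y := le_trans (by exact_mod_cast hle) hy
              have h2 := ih (i + 1) (by omega) (by omega) ha1 y hy'
              have hy0 : (0 : ℝ) ≤ y := le_trans (by exact_mod_cast hN i hin hai) hy
              have h1 : ((1 : ℝ), y) ∈ convexHull ℝ Sb := subset_convexHull ℝ Sb (h1Sb y hy0)
              exact mem_hull_horizontal h1 h2 (hpow_ge1 (i + 1))
                (hpow_mono (i + 1) (i + 2) (by omega))
    have hM2 : D ⊆ convexHull ℝ Sb := by
      rw [hDhull]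
      refine convexHull_min ?_ (convex_convexHull ℝ Sb)
      rintro q ⟨⟨x, y⟩, ⟨i, hi, hai, hx, hy⟩, rfl⟩
      simp only at hx hy ⊢
      subst hx
      have heq : (p : ℝ) * (p : ℝ) ^ i = (p : ℝ) ^ (i + 1) := by ring
      rw [heq]
      exact hC n i hi (by omega) hai y hy
    have hM1 : Set.Icc (1 : ℝ) (p : ℝ) ×ˢ Set.Ici (0 : ℝ) ⊆ convexHull ℝ Sb := by
      rintro ⟨x, y⟩ ⟨⟨hx1, hxp⟩, hy⟩
      simp only [Set.mem_Ici] at hy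
      have h1 : ((1 : ℝ), y) ∈ convexHull ℝ Sb := subset_convexHull ℝ Sb (h1Sb y hy)
      have h2 : (((p : ℝ) ^ i₀, y) : ℝ × ℝ) ∈ convexHull ℝ Sb :=
        subset_convexHull ℝ Sb (hmemSb i₀ hi₀n hbi₀ne y (by rw [hwi₀]; exact_mod_cast hy))
      refine mem_hull_horizontal h1 h2 hx1 (le_trans hxp ?_)
      simpa using hpow_mono 1 i₀ hi₀1
    have hM3 : Sb ⊆ (Set.Icc (1 : ℝ) (p : ℝ) ×ˢ Set.Ici (0 : ℝ)) ∪ D := by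
      rintro ⟨x, y⟩ ⟨i, hi, hbi, hx, hy⟩
      simp only at hx hy
      subst hx
      have hy0 : (0 : ℝ) ≤ y := le_trans (by exact_mod_cast hword i hbi) hy
      rcases lt_or_ge i 2 with hi2 | hi2
      · left
        refine ⟨⟨hpow_ge1 i, ?_⟩, hy0⟩
        calc (p : ℝ) ^ i ≤ (p : ℝ) ^ 1 := hpow_mono i 1 (by omega)
        _ = (p : ℝ) := pow_one _
      · right
        have hbieq : b i = a (i - 1) - c • a i := hbs i (by omega)
        have hkey : (((p : ℝ) ^ (i - 1), y) : ℝ × ℝ) ∈ convexHull ℝ Sa := by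
          by_cases ha1 : a (i - 1) = 0
          · have hbi' : b i = -(c • a i) := by rw [hbieq, ha1, zero_sub]
            have hai : a i ≠ 0 := by
              intro h
              rw [h, smul_zero, neg_zero] at hbi'
              exact hbi hbi'
            have hin : i ≤ n := by
              by_contra hgt
              have : i = n + 1 := by omega
              rw [this] at ha1
              simp only [Nat.add_sub_cancel] at ha1
              exact hn ha1
            obtain ⟨hcne, hco⟩ := smul_facts hc hai
            have hwi : (b i).order = (a i).order := by
              rw [hbi', HahnSeries.order_neg, hco]
            have hyi : ((a i).order : ℝ) ≤ y := by
              rw [← hwi]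
              exact hy
            have h1 : ((1 : ℝ), y) ∈ convexHull ℝ Sa := subset_convexHull ℝ Sa (h1Sa y hy0)
            have h2 := subset_convexHull ℝ Sa (hmemSa i hin hai y hyi)
            exact mem_hull_horizontal h1 h2 (hpow_ge1 (i - 1)) (hpow_mono (i - 1) i (by omega))
          · have hi1n : i - 1 ≤ n := by omega
            rcases le_or_gt (((a (i - 1)).order : ℝ)) y with hcase | hcase
            · exact subset_convexHull ℝ Sa (hmemSa (i - 1) hi1n ha1 y hcase)
            · have hai : a i ≠ 0 := by
                intro h
                have hbeq : b i = a (i - 1) := by rw [hbieq, h, smul_zero, sub_zero]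
                rw [hbeq] at hy
                exact absurd hy (not_le.mpr hcase)
              have hin : i ≤ n := by
                by_contra hgt
                exact hai (htail i (by omega))
              obtain ⟨hcne, hco⟩ := smul_facts hc hai
              have hbi' : a (i - 1) - c • a i ≠ 0 := by
                rw [← hbieq]
                exact hbi
              have hmin := min_le_order_sub hbi' ha1 hcne
              rw [← hbieq, hco] at hmin
              have h2 : (b i).order < (a (i - 1)).order := by
                have h1 : ((b i).order : ℝ) < ((a (i - 1)).order : ℝ) := lt_of_le_of_lt hy hcase
                exact_mod_cast h1
              have hvi : (a i).order ≤ (b i).order := by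
                by_contra hlt'
                push_neg at hlt'
                exact absurd hmin (not_le.mpr (lt_min h2 hlt'))
              have hyi : ((a i).order : ℝ) ≤ y := le_trans (by exact_mod_cast hvi) hy
              have h1 : ((1 : ℝ), y) ∈ convexHull ℝ Sa := subset_convexHull ℝ Sa (h1Sa y hy0)
              have h2' := subset_convexHull ℝ Sa (hmemSa i hin hai y hyi)
              exact mem_hull_horizontal h1 h2' (hpow_ge1 (i - 1)) (hpow_mono (i - 1) i (by omega))
        refine ⟨((p : ℝ) ^ (i - 1), y), hkey, ?_⟩
        have hpe : (p : ℝ) * (p : ℝ) ^ (i - 1) = (p : ℝ) ^ i := by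
          rw [← pow_succ']
          congr 1
          omega
        simp [hpe]
    apply Set.Subset.antisymm
    · exact convexHull_min hM3 (convex_union_strip hpR.le hDconvex hDsub hray)
    · exact Set.union_subset hM1 hM2
  · -- slopes
    have ha0 : a 0 ≠ 0 := by rw [h0]; exact one_ne_zero
    have hv0 : (a 0).order = 0 := by rw [h0]; exact HahnSeries.order_one
    have hpQ : (1 : ℚ) < (p : ℚ) := by exact_mod_cast (by omega : 1 < p)
    have hpowlt : ∀ i j : ℕ, i < j → (p : ℚ) ^ i < (p : ℚ) ^ j :=
      fun i j h => pow_lt_pow_right₀ hpQ h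
    intro s
    rcases lt_trichotomy s 0 with hs | hs | hs
    · -- s < 0 : both sides false
      have hL : mahlerSlopeMult p (n + 1) b s = 0 := by
        unfold mahlerSlopeMult
        apply nat_sub_zero_of_subset_singleton
        rintro i ⟨hin, hbi, hmin⟩
        have h0' := hmin 0 (by omega) hb0ne
        rw [hw0] at h0'
        simp only [pow_zero, mul_one, zero_sub] at h0'
        by_contra hne
        have hi1 : 1 ≤ i := by
          rcases Nat.eq_zero_or_pos i with h | h
          · exact absurd h hne
          · exact h
        have hwi := hword i hbi
        have hp1 : (1 : ℚ) < (p : ℚ) ^ i := by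
          have := hpowlt 0 i (by omega)
          simpa using this
        nlinarith
      have hR : mahlerSlopeMult p n a ((p : ℚ) * s) = 0 :=
        hslopes _ (mul_neg_of_pos_of_neg (by positivity) hs)
      simp [hL, hR, hs.ne]
    · -- s = 0 : both sides true
      subst hs
      constructor
      · intro _; exact Or.inl rfl
      · intro _
        unfold mahlerSlopeMult
        set S := {i : ℕ | i ≤ n + 1 ∧ b i ≠ 0 ∧ ∀ j ≤ n + 1, b j ≠ 0 →
            (b i).order - 0 * (p : ℚ) ^ i ≤ (b j).order - 0 * (p : ℚ) ^ j} with hS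
        have h0mem : 0 ∈ S := by
          refine ⟨by omega, hb0ne, fun j hj hbj => ?_⟩
          simp only [zero_mul, sub_zero, hw0]
          exact hword j hbj
        have hi₀mem : i₀ ∈ S := by
          refine ⟨hi₀n, hbi₀ne, fun j hj hbj => ?_⟩
          simp only [zero_mul, sub_zero, hwi₀]
          exact hword j hbj
        have hinf : sInf S = 0 := Nat.sInf_eq_zero.mpr (Or.inl h0mem)
        have hsup : i₀ ≤ sSup S := le_csSup ⟨n + 1, fun x hx => hx.1⟩ hi₀mem
        omega
    · -- s > 0
      unfold mahlerSlopeMult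
      set t : ℚ := (p : ℚ) * s with htdef
      set SA := {i : ℕ | i ≤ n ∧ a i ≠ 0 ∧ ∀ j ≤ n, a j ≠ 0 →
          (a i).order - t * (p : ℚ) ^ i ≤ (a j).order - t * (p : ℚ) ^ j} with hSA
      set SB := {i : ℕ | i ≤ n + 1 ∧ b i ≠ 0 ∧ ∀ j ≤ n + 1, b j ≠ 0 →
          (b i).order - s * (p : ℚ) ^ i ≤ (b j).order - s * (p : ℚ) ^ j} with hSB
      have hts : ∀ i : ℕ, t * (p : ℚ) ^ i = s * (p : ℚ) ^ (i + 1) := by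
        intro i
        rw [htdef, pow_succ']
        ring
      have hts' : ∀ i : ℕ, 1 ≤ i → t * (p : ℚ) ^ (i - 1) = s * (p : ℚ) ^ i := by
        intro i hi
        rw [hts (i - 1)]
        congr 2
        omega
      have hspow : ∀ i j : ℕ, i < j → s * (p : ℚ) ^ i < s * (p : ℚ) ^ j :=
        fun i j h => mul_lt_mul_of_pos_left (hpowlt i j h) hs
      -- minimizer k of SA
      obtain ⟨k, hkmem⟩ : SA.Nonempty := by
        set F : Finset ℕ := (Finset.range (n + 1)).filter (fun i => a i ≠ 0) with hF
        have h0F : 0 ∈ F := by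
          simp only [hF, Finset.mem_filter, Finset.mem_range]
          exact ⟨by omega, ha0⟩
        obtain ⟨k, hkF, hk⟩ := F.exists_min_image
          (fun i => (a i).order - t * (p : ℚ) ^ i) ⟨0, h0F⟩
        simp only [hF, Finset.mem_filter, Finset.mem_range] at hkF
        refine ⟨k, by omega, hkF.2, fun j hj haj => ?_⟩
        refine hk j ?_
        simp only [hF, Finset.mem_filter, Finset.mem_range]
        exact ⟨by omega, haj⟩
      -- B1 : no cancellation at argmin positions
      have hB1 : ∀ j ∈ SA, b (j + 1) ≠ 0 ∧ (b (j + 1)).order = (a j).order := by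
        rintro j ⟨hjn, haj, hjmin⟩
        rcases eq_or_lt_of_le hjn with hje | hjn'
        · subst hje
          rw [hbn1]
          exact ⟨haj, rfl⟩
        · by_cases ha1 : a (j + 1) = 0
          · have hb : b (j + 1) = a j := by
              rw [hbs (j + 1) (by omega)]
              simp [ha1]
            rw [hb]
            exact ⟨haj, rfl⟩
          · have hlt : (a j).order < (a (j + 1)).order := by
              by_contra hle
              push_neg at hle
              have h1 := hjmin (j + 1) (by omega) ha1
              have h2 := hspow (j + 1) (j + 2) (by omega)
              rw [hts j, hts (j + 1)] at h1
              linarith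
            obtain ⟨hcne, hco⟩ := smul_facts hc ha1
            obtain ⟨hbne, hbo⟩ := order_sub_of_lt haj hcne (by rw [hco]; exact hlt)
            have hb : b (j + 1) = a j - c • a (j + 1) := by
              rw [hbs (j + 1) (by omega)]
              simp
            rw [hb]
            exact ⟨hbne, hbo⟩
      -- lower bound for all b-positions
      have hlow : ∀ i ≤ n + 1, b i ≠ 0 →
          (a k).order - t * (p : ℚ) ^ k ≤ (b i).order - s * (p : ℚ) ^ i := by
        intro i hin hbi
        rcases Nat.eq_zero_or_pos i with hie | hi1
        · subst hie
          have h1 := hkmem.2.2 0 (by omega) ha0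
          rw [hv0] at h1
          simp only [pow_zero, mul_one, zero_sub] at h1 ⊢
          rw [hw0]
          have : s ≤ t := by
            rw [htdef]
            nlinarith
          linarith
        · have hbieq := hbs i hi1
          by_cases ha1 : a (i - 1) = 0
          · have hbi' : b i = -(c • a i) := by rw [hbieq, ha1, zero_sub]
            have hai : a i ≠ 0 := by
              intro h
              rw [h, smul_zero, neg_zero] at hbi'
              exact hbi hbi'
            have hin' : i ≤ n := by
              by_contra hgt
              have hie : i = n + 1 := by omega
              rw [hie] at ha1
              simp only [Nat.add_sub_cancel] at ha1
              exact hn ha1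
            obtain ⟨hcne, hco⟩ := smul_facts hc hai
            have hwi : (b i).order = (a i).order := by rw [hbi', HahnSeries.order_neg, hco]
            have h1 := hkmem.2.2 i hin' hai
            rw [hts i] at h1
            have h2 := (hspow i (i + 1) (by omega)).le
            rw [hwi]
            linarith
          · have hi1n : i - 1 ≤ n := by omega
            have hgk := hkmem.2.2 (i - 1) hi1n ha1
            rw [hts' i hi1] at hgk
            by_cases hai : a i = 0
            · have hbeq : b i = a (i - 1) := by rw [hbieq, hai, smul_zero, sub_zero]
              rw [hbeq]
              linarith
            · have hin' : i ≤ n := by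
                by_contra hgt
                exact hai (htail i (by omega))
              obtain ⟨hcne, hco⟩ := smul_facts hc hai
              have hbi' : a (i - 1) - c • a i ≠ 0 := by rw [← hbieq]; exact hbi
              have hmin := min_le_order_sub hbi' ha1 hcne
              rw [← hbieq, hco] at hmin
              rcases le_total ((a (i - 1)).order) ((a i).order) with hcmp | hcmp
              · rw [min_eq_left hcmp] at hmin
                linarith
              · rw [min_eq_right hcmp] at hmin
                have h1 := hkmem.2.2 i hin' hai
                rw [hts i] at h1
                have h2 := (hspow i (i + 1) (by omega)).le
                linarith
      -- the set equality
      have himg : SB = (fun j => j + 1) '' SA := by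
        ext i
        constructor
        · rintro ⟨hin, hbi, himin⟩
          obtain ⟨hbk, hwk⟩ := hB1 k hkmem
          have hkn : k ≤ n := hkmem.1
          have hle : (b i).order - s * (p : ℚ) ^ i ≤ (a k).order - t * (p : ℚ) ^ k := by
            have h1 := himin (k + 1) (by omega) hbk
            rw [hwk, ← hts k] at h1
            exact h1
          have hi1 : 1 ≤ i := by
            by_contra hlt'
            have hie : i = 0 := by omega
            subst hie
            have h1 := hkmem.2.2 0 (by omega) ha0
            rw [hv0] at h1
            simp only [pow_zero, mul_one, zero_sub] at h1 hle
            rw [hw0] at hle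
            have : t ≤ s := by linarith
            rw [htdef] at this
            nlinarith
          refine ⟨i - 1, ?_, by show i - 1 + 1 = i; omega⟩
          have hbieq := hbs i hi1
          by_cases ha1 : a (i - 1) = 0
          · exfalso
            have hbi' : b i = -(c • a i) := by rw [hbieq, ha1, zero_sub]
            have hai : a i ≠ 0 := by
              intro h
              rw [h, smul_zero, neg_zero] at hbi'
              exact hbi hbi'
            have hin' : i ≤ n := by
              by_contra hgt
              have hie : i = n + 1 := by omega
              rw [hie] at ha1
              simp only [Nat.add_sub_cancel] at ha1
              exact hn ha1
            obtain ⟨hcne, hco⟩ := smul_facts hc hai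
            have hwi : (b i).order = (a i).order := by rw [hbi', HahnSeries.order_neg, hco]
            have h1 := hkmem.2.2 i hin' hai
            rw [hts i] at h1
            have h2 := hspow i (i + 1) (by omega)
            rw [hwi] at hle
            linarith
          · have hi1n : i - 1 ≤ n := by omega
            -- show (a (i-1)).order - t p^(i-1) ≤ gk
            have hsf : (a (i - 1)).order - t * (p : ℚ) ^ (i - 1) ≤
                (a k).order - t * (p : ℚ) ^ k := by
              rw [hts' i hi1]
              by_cases hai : a i = 0
              · have hbeq : b i = a (i - 1) := by rw [hbieq, hai, smul_zero, sub_zero]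
                rw [hbeq] at hle
                linarith
              · have hin' : i ≤ n := by
                  by_contra hgt
                  exact hai (htail i (by omega))
                obtain ⟨hcne, hco⟩ := smul_facts hc hai
                rcases lt_trichotomy ((a (i - 1)).order) ((a i).order) with hcmp | hcmp | hcmp
                · obtain ⟨hbne, hbo⟩ := order_sub_of_lt ha1 hcne (by rw [hco]; exact hcmp)
                  rw [hbieq, hbo] at hle
                  linarith
                · have hbi' : a (i - 1) - c • a i ≠ 0 := by rw [← hbieq]; exact hbi
                  have hmin := min_le_order_sub hbi' ha1 hcne
                  rw [← hbieq, hco, hcmp, min_self] at hmin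
                  rw [← hcmp] at hmin
                  linarith
                · exfalso
                  obtain ⟨hbne, hbo⟩ := order_sub_of_lt hcne ha1 (by rw [hco]; exact hcmp)
                  have hbeq : b i = -(c • a i - a (i - 1)) := by rw [hbieq]; ring
                  have hwi : (b i).order = (a i).order := by
                    rw [hbeq, HahnSeries.order_neg, hbo, hco]
                  have h1 := hkmem.2.2 i hin' hai
                  rw [hts i] at h1
                  have h2 := hspow i (i + 1) (by omega)
                  rw [hwi] at hle
                  linarith
            refine ⟨hi1n, ha1, fun j hj haj => ?_⟩
            exact le_trans hsf (hkmem.2.2 j hj haj)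
        · rintro ⟨j, hjSA, rfl⟩
          change j + 1 ∈ SB
          obtain ⟨hbne, hbo⟩ := hB1 j hjSA
          refine ⟨by have := hjSA.1; omega, hbne, fun i hi hbi => ?_⟩
          have h1 := hlow i hi hbi
          have h2 : (a j).order - t * (p : ℚ) ^ j ≤ (a k).order - t * (p : ℚ) ^ k :=
            hjSA.2.2 k hkmem.1 hkmem.2.1
          rw [hbo, ← hts j]
          linarith
      have hSAne : SA.Nonempty := ⟨k, hkmem⟩
      have hSAbdd : BddAbove SA := ⟨n, fun x hx => hx.1⟩
      have hSBbdd : BddAbove SB := ⟨n + 1, fun x hx => hx.1⟩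
      have hsup : sSup SB = sSup SA + 1 := by
        apply le_antisymm
        · apply csSup_le ⟨k + 1, by rw [himg]; exact ⟨k, hkmem, rfl⟩⟩
          intro x hx
          rw [himg] at hx
          obtain ⟨j, hj, rfl⟩ := hx
          exact Nat.succ_le_succ (le_csSup hSAbdd hj)
        · refine le_csSup hSBbdd ?_
          rw [himg]
          exact ⟨sSup SA, Nat.sSup_mem hSAne hSAbdd, rfl⟩
      have hinf : sInf SB = sInf SA + 1 := by
        apply le_antisymm
        · exact csInf_le (OrderBot.bddBelow _) (by rw [himg]; exact ⟨sInf SA, Nat.sInf_mem hSAne, rfl⟩)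
        · apply le_csInf ⟨k + 1, by rw [himg]; exact ⟨k, hkmem, rfl⟩⟩
          intro x hx
          rw [himg] at hx
          obtain ⟨j, hj, rfl⟩ := hx
          exact Nat.succ_le_succ (Nat.sInf_le hj)
      rw [hsup, hinf]
      have heq : sSup SA + 1 - (sInf SA + 1) = sSup SA - sInf SA := by omega
      rw [heq]
      constructor
      · exact fun h => Or.inr h
      · rintro (h | h)
        · exact absurd h hs.ne'
        · exact h
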